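/- For all n ≥ 0 and t ≥ 2, (F(t−1) − 2) · c(2^t n + 2^{t−1}) = 3 · F(t−1) · c(2^t n + 2^{t−1} − 2). -/

import Mathlib

def c (n : Nat) : Nat := ∑ i ∈ Finset.range (n+1), (Nat.choose n i % 2) * 2^i

def F (k : Nat) : Nat := 2^(2^k) + 1

/-- generalized `c` with base `x`. -/
def d (x n : Nat) : Nat := ∑ i ∈ Finset.range (n+1), (Nat.choose n i % 2) * x^i

lemma c_eq_d (n : Nat) : c n = d 2 n := rfl

lemma sum_range_double {M : Type*} [AddCommMonoid M] (N : ℕ) (f : ℕ → M) :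
    ∑ i ∈ Finset.range (2*N), f i = ∑ j ∈ Finset.range N, (f (2*j) + f (2*j+1)) := by
  induction N with
  | zero => simp
  | succ N ih =>
    rw [show 2*(N+1) = (2*N+1)+1 from by ring, Finset.sum_range_succ, Finset.sum_range_succ,
      ih, Finset.sum_range_succ, add_assoc]

lemma choose_two_mod (n k : ℕ) :
    Nat.choose n k % 2 = (Nat.choose (n % 2) (k % 2) % 2) * (Nat.choose (n / 2) (k / 2) % 2) := by
  have h := @Choose.choose_modEq_choose_mod_mul_choose_div_nat n k 2 ⟨Nat.prime_two⟩
  unfold Nat.ModEq at h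
  rw [h, Nat.mul_mod]
  apply Nat.mod_eq_of_lt
  have h1 : Nat.choose (n % 2) (k % 2) % 2 ≤ 1 := Nat.lt_succ_iff.mp (Nat.mod_lt _ (by norm_num))
  have h2 : Nat.choose (n / 2) (k / 2) % 2 ≤ 1 := Nat.lt_succ_iff.mp (Nat.mod_lt _ (by norm_num))
  calc _ ≤ 1 * 1 := Nat.mul_le_mul h1 h2
  _ < 2 := by norm_num

lemma d_extend (x n N : ℕ) (hN : n + 1 ≤ N) :
    d x n = ∑ i ∈ Finset.range N, (Nat.choose n i % 2) * x^i := by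
  apply Finset.sum_subset
  · exact Finset.range_subset_range.mpr hN
  · intro i _ hi
    rw [Finset.mem_range, not_lt] at hi
    rw [Nat.choose_eq_zero_of_lt (by omega)]
    simp

lemma d_even (x m : ℕ) : d x (2*m) = d (x*x) m := by
  rw [d_extend x (2*m) (2*(m+1)) (by omega), sum_range_double]
  unfold d
  apply Finset.sum_congr rfl
  intro j _
  rw [choose_two_mod (2*m) (2*j), choose_two_mod (2*m) (2*j+1)]
  have h1 : (2*m) % 2 = 0 := by omega
  have h2 : (2*m) / 2 = m := by omega
  have h3 : (2*j) % 2 = 0 := by omega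
  have h4 : (2*j) / 2 = j := by omega
  have h5 : (2*j+1) % 2 = 1 := by omega
  have h6 : (2*j+1) / 2 = j := by omega
  rw [h1, h2, h3, h4, h5, h6]
  simp [Nat.choose, pow_mul, pow_succ, mul_comm, mul_assoc, mul_left_comm, sq]
  ring_nf

lemma d_odd (x m : ℕ) : d x (2*m+1) = (1+x) * d (x*x) m := by
  conv_lhs => unfold d
  rw [show 2*m+1+1 = 2*(m+1) from by ring, sum_range_double]
  unfold d
  rw [Finset.mul_sum]
  apply Finset.sum_congr rfl
  intro j _
  rw [choose_two_mod (2*m+1) (2*j), choose_two_mod (2*m+1) (2*j+1)]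
  have h1 : (2*m+1) % 2 = 1 := by omega
  have h2 : (2*m+1) / 2 = m := by omega
  have h3 : (2*j) % 2 = 0 := by omega
  have h4 : (2*j) / 2 = j := by omega
  have h5 : (2*j+1) % 2 = 1 := by omega
  have h6 : (2*j+1) / 2 = j := by omega
  rw [h1, h2, h3, h4, h5, h6]
  simp [Nat.choose, pow_mul, pow_succ]
  ring_nf

lemma d_split (k : ℕ) : ∀ m a x : ℕ, a < 2^k →
    d x (2^k * m + a) = d x a * d (x^(2^k)) m := by
  induction k with
  | zero =>
    intro m a x ha
    interval_cases a
    simp [d, Nat.choose]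
  | succ k ih =>
    intro m a x ha
    have h2 : 2^(k+1) = 2*2^k := by rw [pow_succ]; ring
    obtain ⟨q, b, hb, hab⟩ : ∃ q b, b < 2 ∧ a = 2*q + b := ⟨a/2, a%2, by omega, by omega⟩
    have hq : q < 2^k := by omega
    have key : 2^(k+1)*m + a = 2*(2^k*m + q) + b := by rw [h2, mul_assoc]; omega
    have hpow : (x*x)^(2^k) = x^(2^(k+1)) := by
      rw [h2, pow_mul, pow_two]
    interval_cases b
    · simp only [Nat.add_zero] at key hab
      rw [key, d_even, ih m q (x*x) hq, hpow, hab, d_even]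
    · rw [key, d_odd, ih m q (x*x) hq, hpow, hab, d_odd]
      ring

lemma three_mul_d (s : ℕ) (hs : 1 ≤ s) : 3 * d 2 (2^s - 2) = 2^(2^s) - 1 := by
  induction s with
  | zero => omega
  | succ s ih =>
    rcases Nat.eq_or_lt_of_le hs with h | h
    · have hz : s = 0 := by omega
      subst hz
      norm_num [d]
    · have hs1 : 1 ≤ s := by omega
      have h2s : 2 ≤ 2^s := by
        calc 2 = 2^1 := rfl
        _ ≤ 2^s := Nat.pow_le_pow_right (by norm_num) hs1
      have key : 2^(s+1) - 2 = 2^s * 1 + (2^s - 2) := by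
        have : 2^(s+1) = 2*2^s := by rw [pow_succ]; ring
        omega
      rw [key, d_split s 1 (2^s-2) 2 (by omega)]
      have hd1 : d (2^(2^s)) 1 = 1 + 2^(2^s) := by
        simp [d, Finset.sum_range_succ]
      rw [hd1]
      have hih := ih hs1
      have hpow : 2^(2^(s+1)) = 2^(2^s) * 2^(2^s) := by
        rw [← pow_add, pow_succ]
        congr 1
        omega
      calc 3 * (d 2 (2^s-2) * (1+2^(2^s))) = (3 * d 2 (2^s-2)) * (1+2^(2^s)) := by ring
      _ = (2^(2^s)-1) * (1+2^(2^s)) := by rw [hih]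
      _ = 2^(2^s)*2^(2^s) - 1 := by
          obtain ⟨y, hy⟩ := Nat.exists_eq_add_of_le (Nat.one_le_two_pow (n := 2^s))
          rw [hy, Nat.add_sub_cancel_left]
          have hr : (1+y)*(1+y) = (1+y-1)*(1+(1+y)) + 1 := by
            rw [Nat.add_sub_cancel_left]; ring
          rw [hr, Nat.add_sub_cancel, Nat.add_sub_cancel_left]
      _ = 2^(2^(s+1)) - 1 := by rw [hpow]

theorem stmt11 (n t : Nat) (ht : 2 ≤ t) :
    (F (t-1) - 2) * c (2^t * n + 2^(t-1)) = 3 * F (t-1) * c (2^t * n + 2^(t-1) - 2) := by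
  obtain ⟨s, rfl⟩ : ∃ s, t = s + 1 := ⟨t - 1, by omega⟩
  have hs : 1 ≤ s := by omega
  simp only [Nat.add_sub_cancel]
  have h2s : 2 ≤ 2^s := by
    calc 2 = 2^1 := rfl
    _ ≤ 2^s := Nat.pow_le_pow_right (by norm_num) hs
  have hlt : 2^s < 2^(s+1) := Nat.pow_lt_pow_right (by norm_num) (by omega)
  have e1 : c (2^(s+1) * n + 2^s) = d 2 (2^s) * d (2^(2^(s+1))) n := by
    rw [c_eq_d, d_split (s+1) n (2^s) 2 hlt]
  have e2 : c (2^(s+1) * n + 2^s - 2) = d 2 (2^s - 2) * d (2^(2^(s+1))) n := by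
    have : 2^(s+1) * n + 2^s - 2 = 2^(s+1) * n + (2^s - 2) := by omega
    rw [this, c_eq_d, d_split (s+1) n (2^s - 2) 2 (by omega)]
  have e3 : d 2 (2^s) = F s := by
    have := d_split s 1 0 2 (Nat.pow_pos (by norm_num))
    simp only [mul_one, Nat.add_zero] at this
    rw [this]
    simp [d, Finset.sum_range_succ, Nat.choose, F, add_comm]
  rw [e1, e2, e3]
  have hkey := three_mul_d s hs
  have hF2 : F s - 2 = 2^(2^s) - 1 := by unfold F; omega
  rw [hF2, ← hkey]
  ring
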